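/- For a prime p ≥ 7, the congruence C(2p-1, p-1) ≡ 1 (mod p⁴) holds if and only if ∑_{k=1}^{p-1} 1/k ≡ 0 (mod p³). -/

import Mathlib

open Finset Nat

-- factorial shift product
private lemma aux_prod_shift (p n : ℕ) :
    p ! * ∏ k ∈ Icc 1 n, (p + k) = (p + n)! := by
  induction n with
  | zero => simp
  | succ n ih =>
    rw [Finset.prod_Icc_succ_top (by omega : 1 ≤ n + 1), ← mul_assoc, ih,
      ← Nat.add_assoc, Nat.factorial_succ, mul_comm]

private lemma aux_choose_eq_prod (p : ℕ) (hp : 0 < p) :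
    ((2 * p - 1).choose (p - 1) : ℚ) = ∏ k ∈ Icc 1 (p - 1), ((p : ℚ) + k) / k := by
  have hfac : ∀ n : ℕ, ((n ! : ℕ) : ℚ) ≠ 0 := fun n => by
    exact_mod_cast n.factorial_ne_zero
  rw [Finset.prod_div_distrib]
  have h1 : ∏ k ∈ Icc 1 (p - 1), ((k : ℚ)) = ((p - 1)! : ℚ) := by
    rw [← Nat.cast_prod]
    norm_cast
    rw [← Finset.Ico_add_one_right_eq_Icc, Finset.prod_Ico_id_eq_factorial]
  have h2 : ∏ k ∈ Icc 1 (p - 1), ((p : ℚ) + k) = ((2 * p - 1)! : ℚ) / (p ! : ℚ) := by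
    have h := aux_prod_shift p (p - 1)
    have hpp : p + (p - 1) = 2 * p - 1 := by omega
    rw [hpp] at h
    have : ((p ! : ℕ) : ℚ) * ∏ k ∈ Icc 1 (p - 1), ((p : ℚ) + k) = ((2 * p - 1)! : ℚ) := by
      rw [← h]
      push_cast
      ring
    field_simp at this ⊢
    linarith [this]
  rw [h1, h2, Nat.cast_choose ℚ (by omega : p - 1 ≤ 2 * p - 1)]
  have h3 : 2 * p - 1 - (p - 1) = p := by omega
  rw [h3, div_div, mul_comm ((p !:ℕ):ℚ)]

private lemma aux_reflect_prod (m : ℕ) (f : ℕ → ℚ) :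
    ∏ k ∈ Ioc m (2 * m), f k = ∏ k ∈ Ioc 0 m, f (2 * m + 1 - k) := by
  refine Finset.prod_nbij' (fun k => 2 * m + 1 - k) (fun k => 2 * m + 1 - k) ?_ ?_ ?_ ?_ ?_ <;>
      intro a ha <;> simp only [Finset.mem_Ioc] at * <;> try omega
  congr 1; omega

private lemma aux_reflect_sum (m : ℕ) (f : ℕ → ℚ) :
    ∑ k ∈ Ioc m (2 * m), f k = ∑ k ∈ Ioc 0 m, f (2 * m + 1 - k) := by
  refine Finset.sum_nbij' (fun k => 2 * m + 1 - k) (fun k => 2 * m + 1 - k) ?_ ?_ ?_ ?_ ?_ <;>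
      intro a ha <;> simp only [Finset.mem_Ioc] at * <;> try omega
  congr 1; omega

private lemma aux_pair_prod (p m : ℕ) (hpm : p = 2 * m + 1) (hm : 1 ≤ m) :
    ∏ k ∈ Icc 1 (p - 1), ((p : ℚ) + k) / k
      = ∏ k ∈ Ioc 0 m, (1 + 2 * (p : ℚ) ^ 2 / (k * ((p : ℚ) - k))) := by
  have h1 : Icc 1 (p - 1) = Ioc 0 (2 * m) := by
    subst hpm; rw [← Finset.Icc_add_one_left_eq_Ioc]; rfl
  rw [h1, ← Finset.prod_Ioc_consecutive _ (Nat.zero_le m) (by omega : m ≤ 2 * m),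
    aux_reflect_prod, ← Finset.prod_mul_distrib]
  refine Finset.prod_congr rfl ?_
  intro k hk
  simp only [Finset.mem_Ioc] at hk
  have hc : ((2 * m + 1 - k : ℕ) : ℚ) = (p : ℚ) - k := by
    rw [Nat.cast_sub (by omega)]
    subst hpm; push_cast; ring
  rw [hc]
  have hk0 : (k : ℚ) ≠ 0 := Nat.cast_ne_zero.mpr (by omega)
  have hkp : (k : ℚ) < (p : ℚ) := by exact_mod_cast (by omega : k < p)
  have hpk : (p : ℚ) - k ≠ 0 := by linarith
  field_simp
  ring

private lemma aux_pair_sum (p m : ℕ) (hpm : p = 2 * m + 1) (hm : 1 ≤ m) :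
    ∑ k ∈ Ioc 0 m, 2 * (p : ℚ) ^ 2 / (k * ((p : ℚ) - k))
      = 2 * p * ∑ k ∈ Icc 1 (p - 1), 1 / (k : ℚ) := by
  have h1 : Icc 1 (p - 1) = Ioc 0 (2 * m) := by
    subst hpm; rw [← Finset.Icc_add_one_left_eq_Ioc]; rfl
  rw [h1, ← Finset.sum_Ioc_consecutive _ (Nat.zero_le m) (by omega : m ≤ 2 * m),
    aux_reflect_sum, ← Finset.sum_add_distrib, Finset.mul_sum]
  refine Finset.sum_congr rfl ?_
  intro k hk
  simp only [Finset.mem_Ioc] at hk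
  have hc : ((2 * m + 1 - k : ℕ) : ℚ) = (p : ℚ) - k := by
    rw [Nat.cast_sub (by omega)]
    subst hpm; push_cast; ring
  rw [hc]
  have hk0 : (k : ℚ) ≠ 0 := Nat.cast_ne_zero.mpr (by omega)
  have hkp : (k : ℚ) < (p : ℚ) := by exact_mod_cast (by omega : k < p)
  have hpk : (p : ℚ) - k ≠ 0 := by linarith
  field_simp
  ring

private lemma aux_padicNorm_prod_le {p : ℕ} [Fact p.Prime] {s : Finset ℕ} {f : ℕ → ℚ} {b : ℚ}
    (hb : 0 ≤ b) (h : ∀ k ∈ s, padicNorm p (f k) ≤ b) :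
    padicNorm p (∏ k ∈ s, f k) ≤ b ^ s.card := by
  classical
  induction s using Finset.cons_induction with
  | empty => simp [padicNorm.one]
  | cons a s ha ih =>
    rw [Finset.prod_cons, padicNorm.mul, Finset.card_cons, pow_succ, mul_comm (b ^ s.card) b]
    exact mul_le_mul (h a (Finset.mem_cons_self a s))
      (ih fun k hk => h k (Finset.mem_cons_of_mem hk)) (padicNorm.nonneg _) hb

private lemma aux_c_norm (p m : ℕ) (hp : p.Prime) [Fact p.Prime] (hpm : p = 2 * m + 1)
    (h7 : 7 ≤ p) (k : ℕ) (hk : k ∈ Ioc 0 m) :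
    padicNorm p (2 * (p : ℚ) ^ 2 / ((k : ℚ) * ((p : ℚ) - k))) ≤ (p : ℚ) ^ (-2 : ℤ) := by
  simp only [Finset.mem_Ioc] at hk
  have hc : ((k : ℚ) * ((p : ℚ) - k)) = ((k * (p - k) : ℕ) : ℚ) := by
    push_cast [Nat.cast_sub (by omega : k ≤ p)]; ring
  have hden : padicNorm p ((k * (p - k) : ℕ) : ℚ) = 1 := by
    rw [padicNorm.nat_eq_one_iff]
    intro hdvd
    rcases (Nat.Prime.dvd_mul hp).mp hdvd with h | h
    · exact absurd (Nat.le_of_dvd (by omega) h) (by omega)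
    · exact absurd (Nat.le_of_dvd (by omega) h) (by omega)
  have h2 : padicNorm p (2 : ℚ) = 1 := by
    have : ((2 : ℕ) : ℚ) = (2 : ℚ) := by norm_num
    rw [← this, padicNorm.nat_eq_one_iff]
    exact fun h => absurd (Nat.le_of_dvd (by norm_num) h) (by omega)
  have hpnorm : padicNorm p ((p : ℚ)) = (p : ℚ)⁻¹ := padicNorm.padicNorm_p (by omega)
  rw [padicNorm.div, hc, hden, div_one, padicNorm.mul, h2, one_mul, sq, padicNorm.mul, hpnorm]
  rw [← zpow_neg_one, ← zpow_add₀ (by positivity : (p : ℚ) ≠ 0)]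
  norm_num

private lemma aux_expand (p m : ℕ) (hp : p.Prime) (hpm : p = 2 * m + 1) (h7 : 7 ≤ p) :
    ∃ E : ℚ, (∏ k ∈ Ioc 0 m, (1 + 2 * (p : ℚ) ^ 2 / ((k : ℚ) * ((p : ℚ) - k))))
        = 1 + (∑ k ∈ Ioc 0 m, 2 * (p : ℚ) ^ 2 / ((k : ℚ) * ((p : ℚ) - k))) + E
      ∧ padicNorm p E ≤ (p : ℚ) ^ (-(4 : ℤ)) := by
  classical
  haveI : Fact p.Prime := ⟨hp⟩
  set c : ℕ → ℚ := fun k => 2 * (p : ℚ) ^ 2 / ((k : ℚ) * ((p : ℚ) - k)) with hc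
  set s : Finset ℕ := Ioc 0 m with hs
  have hprod : ∏ k ∈ s, (1 + c k) = ∑ t ∈ s.powerset, ∏ k ∈ t, c k := by
    rw [Finset.prod_congr rfl (fun k _ => add_comm 1 (c k)), Finset.prod_add]
    exact Finset.sum_congr rfl fun t _ => by rw [Finset.prod_const_one, mul_one]
  have hsplit := Finset.sum_filter_add_sum_filter_not s.powerset
      (fun t => t.card ≤ 1) (fun t => ∏ k ∈ t, c k)
  have hfil : s.powerset.filter (fun t => t.card ≤ 1)
      = insert ∅ (s.image (fun a => {a})) := by
    ext t
    simp only [Finset.mem_filter, Finset.mem_powerset, Finset.mem_insert, Finset.mem_image,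
      Nat.le_one_iff_eq_zero_or_eq_one, Finset.card_eq_zero, Finset.card_eq_one]
    constructor
    · rintro ⟨hsub, rfl | ⟨a, rfl⟩⟩
      · exact Or.inl rfl
      · exact Or.inr ⟨a, hsub (Finset.mem_singleton_self a), rfl⟩
    · rintro (rfl | ⟨a, ha, rfl⟩)
      · exact ⟨Finset.empty_subset _, Or.inl rfl⟩
      · exact ⟨Finset.singleton_subset_iff.mpr ha, Or.inr ⟨a, rfl⟩⟩
  have hlow : ∑ t ∈ s.powerset.filter (fun t => t.card ≤ 1), ∏ k ∈ t, c k
      = 1 + ∑ k ∈ s, c k := by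
    rw [hfil, Finset.sum_insert (by
      simp only [Finset.mem_image]
      rintro ⟨a, -, h⟩
      exact (Finset.singleton_ne_empty a) h)]
    rw [Finset.sum_image (fun x _ y _ h => Finset.singleton_inj.mp h)]
    simp
  refine ⟨∑ t ∈ s.powerset.filter (fun t => ¬ t.card ≤ 1), ∏ k ∈ t, c k, ?_, ?_⟩
  · rw [hprod, ← hsplit, hlow]
  · apply padicNorm.sum_le' _ (by positivity)
    intro t ht
    simp only [Finset.mem_filter, Finset.mem_powerset, not_le] at ht
    have hcard : 2 ≤ t.card := ht.2
    have hb : padicNorm p (∏ k ∈ t, c k) ≤ ((p : ℚ) ^ (-2 : ℤ)) ^ t.card :=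
      aux_padicNorm_prod_le (by positivity)
        (fun k hk => aux_c_norm p m hp hpm h7 k (ht.1 hk))
    refine hb.trans ?_
    rw [← zpow_natCast ((p : ℚ) ^ (-2 : ℤ)), ← zpow_mul]
    apply zpow_le_zpow_right₀ (by exact_mod_cast (by omega : 1 ≤ p))
    omega

/-- `a ≡ b (mod p^n)` in the `p`-adic sense for rationals. -/
def PadicCong (p : ℕ) (n : ℕ) (a b : ℚ) : Prop :=
  padicNorm p (a - b) ≤ (p : ℚ) ^ (-(n : ℤ))

theorem stmt3 (p : ℕ) (hp : p.Prime) (h7 : 7 ≤ p) :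
    PadicCong p 4 ((Nat.choose (2 * p - 1) (p - 1)) : ℚ) 1 ↔ PadicCong p 3 (∑ k ∈ Finset.Icc 1 (p - 1), (1 : ℚ) / (k : ℚ)) 0 := by
  haveI : Fact p.Prime := ⟨hp⟩
  obtain ⟨m, hpm⟩ : ∃ m, p = 2 * m + 1 := by
    obtain ⟨m, hm'⟩ := hp.odd_of_ne_two (by omega)
    exact ⟨m, by omega⟩
  have hm : 3 ≤ m := by omega
  set H : ℚ := ∑ k ∈ Finset.Icc 1 (p - 1), (1 : ℚ) / (k : ℚ) with hH
  obtain ⟨E, hE, hEnorm⟩ := aux_expand p m hp hpm h7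
  have hCeq : ((2 * p - 1).choose (p - 1) : ℚ) = 1 + 2 * p * H + E := by
    rw [aux_choose_eq_prod p (by omega), aux_pair_prod p m hpm (by omega), hE,
      aux_pair_sum p m hpm (by omega)]
  have hq0 : (0 : ℚ) < (p : ℚ) := by exact_mod_cast hp.pos
  have hqne : (p : ℚ) ≠ 0 := ne_of_gt hq0
  have h2n : padicNorm p (2 : ℚ) = 1 := by
    have : ((2 : ℕ) : ℚ) = (2 : ℚ) := by norm_num
    rw [← this, padicNorm.nat_eq_one_iff]
    exact fun h => absurd (Nat.le_of_dvd (by norm_num) h) (by omega)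
  have hpn : padicNorm p ((p : ℚ)) = (p : ℚ)⁻¹ := padicNorm.padicNorm_p (by omega)
  have hnorm2pH : padicNorm p (2 * (p : ℚ) * H) = (p : ℚ)⁻¹ * padicNorm p H := by
    rw [mul_assoc, padicNorm.mul, h2n, one_mul, padicNorm.mul, hpn]
  have hsub : ((2 * p - 1).choose (p - 1) : ℚ) - 1 = 2 * (p : ℚ) * H + E := by
    rw [hCeq]; ring
  have h43 : (p : ℚ)⁻¹ * (p : ℚ) ^ (-(3 : ℤ)) = (p : ℚ) ^ (-(4 : ℤ)) := by
    rw [← zpow_neg_one, ← zpow_add₀ hqne]; norm_num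
  constructor
  · intro h
    unfold PadicCong at h ⊢
    rw [sub_zero]
    have hE' : padicNorm p (2 * (p : ℚ) * H) ≤ (p : ℚ) ^ (-(4 : ℤ)) := by
      have : 2 * (p : ℚ) * H = (((2 * p - 1).choose (p - 1) : ℚ) - 1) + (-E) := by
        rw [hsub]; ring
      rw [this]
      refine le_trans padicNorm.nonarchimedean (max_le ?_ ?_)
      · exact_mod_cast h
      · rw [padicNorm.neg]; exact_mod_cast hEnorm
    rw [hnorm2pH] at hE'
    have := mul_le_mul_of_nonneg_left hE' (le_of_lt hq0)
    rw [← mul_assoc, mul_inv_cancel₀ hqne, one_mul] at this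
    have heq : (p : ℚ) * (p : ℚ) ^ (-(4 : ℤ)) = (p : ℚ) ^ (-(3 : ℤ)) := by
      rw [show (-(3 : ℤ)) = 1 + (-(4 : ℤ)) by norm_num, zpow_add₀ hqne, zpow_one]
    rw [heq] at this
    exact_mod_cast this
  · intro h
    unfold PadicCong at h ⊢
    rw [sub_zero] at h
    rw [hsub]
    refine le_trans padicNorm.nonarchimedean (max_le ?_ ?_)
    · rw [hnorm2pH]
      calc (p : ℚ)⁻¹ * padicNorm p H ≤ (p : ℚ)⁻¹ * (p : ℚ) ^ (-(3 : ℤ)) := by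
            apply mul_le_mul_of_nonneg_left _ (by positivity)
            exact_mod_cast h
        _ = (p : ℚ) ^ (-(4 : ℤ)) := h43
        _ ≤ (p : ℚ) ^ (-(4 : ℤ)) := le_refl _
    · exact_mod_cast hEnorm
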